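/- Weighted infinite Cauchy–Binet identity: let N ≥ 1, let c : ℕ → ℝ with c_l ≥ 0, let p : ℕ → (ℤ → ℝ), and let x, y : Fin N → ℤ. Assume that Σ_{l∈ℕ} c_l·|p_l(x_i)|·|p_l(y_j)| < ∞ for all i, j. Then the family, indexed by strictly decreasing tuples l_1 > l_2 > ⋯ > l_N ≥ 0 of natural numbers, of the numbers (∏_{i=1}^{N} c_{l_i}) · det[p_{l_i}(x_j)]_{i,j=1}^{N} · det[p_{l_i}(y_j)]_{i,j=1}^{N} is summable, and its sum equals det[Σ_{l∈ℕ} c_l · p_l(x_i) · p_l(y_j)]_{i,j=1}^{N}. -/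

import Mathlib

open Finset

lemma wcb_aux_prod_tsum (n : ℕ) : ∀ (g : Fin n → ℕ → ℝ), (∀ i, Summable fun t => ‖g i t‖) →
    Summable (fun l : Fin n → ℕ => ‖∏ i, g i (l i)‖) ∧
    (∑' l : Fin n → ℕ, ∏ i, g i (l i)) = ∏ i, ∑' t, g i t := by
  induction n with
  | zero =>
    intro g _
    constructor
    · exact .of_finite
    · simp
  | succ n ih =>
    intro g hg
    obtain ⟨ihs, ihe⟩ := ih (fun i => g i.succ) (fun i => hg i.succ)
    have hGnorm := Summable.mul_norm (hg 0) ihs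
    have key : ∀ l : Fin (n+1) → ℕ,
        ∏ i, g i (l i) = g 0 (((Fin.consEquiv (fun _ : Fin (n+1) => ℕ)).symm l).1) *
          ∏ i, g i.succ (((Fin.consEquiv (fun _ : Fin (n+1) => ℕ)).symm l).2 i) := by
      intro l
      simp [Fin.consEquiv, Fin.tail, Fin.prod_univ_succ]
    constructor
    · have h1 := hGnorm.comp_injective ((Fin.consEquiv (fun _ : Fin (n+1) => ℕ)).symm).injective
      exact h1.congr fun l => by rw [Function.comp_apply, key]
    · have h2 := tsum_mul_tsum_of_summable_norm (hg 0) ihs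
      calc ∑' l : Fin (n+1) → ℕ, ∏ i, g i (l i)
          = ∑' l : Fin (n+1) → ℕ, (fun q : ℕ × (Fin n → ℕ) => g 0 q.1 * ∏ i, g i.succ (q.2 i))
              ((Fin.consEquiv (fun _ : Fin (n+1) => ℕ)).symm l) := tsum_congr key
        _ = ∑' q : ℕ × (Fin n → ℕ), g 0 q.1 * ∏ i, g i.succ (q.2 i) :=
            ((Fin.consEquiv (fun _ : Fin (n+1) => ℕ)).symm).tsum_eq fun q : ℕ × (Fin n → ℕ) => g 0 q.1 * ∏ i, g i.succ (q.2 i)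
        _ = (∑' t, g 0 t) * ∑' m : Fin n → ℕ, ∏ i, g i.succ (m i) := h2.symm
        _ = ∏ i, ∑' t, g i t := by rw [Fin.prod_univ_succ, ihe]

/-- Weighted infinite Cauchy–Binet identity: for nonnegative weights `c : ℕ → ℝ`,
functions `p : ℕ → (ℤ → ℝ)` and points `x, y : Fin N → ℤ` with
`Σ_l c_l·|p_l(x_i)|·|p_l(y_j)| < ∞` for all `i, j`, the family
`(∏_i c_{l_i})·det[p_{l_i}(x_j)]·det[p_{l_i}(y_j)]`, indexed by strictly decreasing
tuples `l₁ > ⋯ > l_N ≥ 0`, is summable with sum `det[Σ_l c_l p_l(x_i) p_l(y_j)]`. -/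
theorem weighted_cauchy_binet (N : ℕ) (hN : 1 ≤ N) (c : ℕ → ℝ) (hc : ∀ l, 0 ≤ c l)
    (p : ℕ → ℤ → ℝ) (x y : Fin N → ℤ)
    (hsum : ∀ i j : Fin N, Summable fun l : ℕ => c l * |p l (x i)| * |p l (y j)|) :
    Summable (fun l : {l : Fin N → ℕ // StrictAnti l} =>
      (∏ i, c (l.1 i)) * Matrix.det (Matrix.of fun i j => p (l.1 i) (x j))
        * Matrix.det (Matrix.of fun i j => p (l.1 i) (y j))) ∧
    ∑' l : {l : Fin N → ℕ // StrictAnti l},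
        (∏ i, c (l.1 i)) * Matrix.det (Matrix.of fun i j => p (l.1 i) (x j))
          * Matrix.det (Matrix.of fun i j => p (l.1 i) (y j))
      = Matrix.det (Matrix.of fun i j => ∑' t : ℕ, c t * p t (x i) * p t (y j)) := by
  classical
  -- real determinant expansion
  have det_exp : ∀ (M : Matrix (Fin N) (Fin N) ℝ),
      M.det = ∑ σ : Equiv.Perm (Fin N), ((Equiv.Perm.sign σ : ℤ) : ℝ) * ∏ i, M (σ i) i := by
    intro M
    rw [Matrix.det_apply]
    refine Finset.sum_congr rfl fun σ _ => ?_
    rw [Units.smul_def, zsmul_eq_mul]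
  -- the per-permutation summands
  set g : Equiv.Perm (Fin N) → Fin N → ℕ → ℝ :=
    fun σ i t => c t * p t (x (σ i)) * p t (y i) with hgdef
  have hg : ∀ (σ : Equiv.Perm (Fin N)) (i : Fin N), Summable fun t => ‖g σ i t‖ := by
    intro σ i
    refine (hsum (σ i) i).congr fun t => ?_
    simp [hgdef, Real.norm_eq_abs, abs_mul, abs_of_nonneg (hc t)]
  have haux := fun σ : Equiv.Perm (Fin N) => wcb_aux_prod_tsum N (g σ) (hg σ)
  set K : Equiv.Perm (Fin N) → (Fin N → ℕ) → ℝ :=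
    fun σ l => ((Equiv.Perm.sign σ : ℤ) : ℝ) * ∏ i, g σ i (l i) with hKdef
  have hKsum : ∀ σ, Summable (K σ) := by
    intro σ
    have h1 : Summable fun l : Fin N → ℕ => ∏ i, g σ i (l i) := (haux σ).1.of_norm
    exact h1.mul_left _
  set H : (Fin N → ℕ) → ℝ := fun l => ∑ σ : Equiv.Perm (Fin N), K σ l with hHdef
  have hHsum : Summable H := summable_sum fun σ _ => hKsum σ
  -- determinant equals total sum
  have hdet : Matrix.det (Matrix.of fun i j => ∑' t : ℕ, c t * p t (x i) * p t (y j))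
      = ∑' l : Fin N → ℕ, H l := by
    rw [det_exp]
    have step : ∀ σ : Equiv.Perm (Fin N),
        ∏ i, (Matrix.of fun i j => ∑' t : ℕ, c t * p t (x i) * p t (y j)) (σ i) i
          = ∑' l : Fin N → ℕ, ∏ i, g σ i (l i) := by
      intro σ
      rw [(haux σ).2]
      rfl
    calc ∑ σ : Equiv.Perm (Fin N), ((Equiv.Perm.sign σ : ℤ) : ℝ) *
            ∏ i, (Matrix.of fun i j => ∑' t : ℕ, c t * p t (x i) * p t (y j)) (σ i) i
        = ∑ σ : Equiv.Perm (Fin N), ∑' l : Fin N → ℕ, K σ l := by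
          refine Finset.sum_congr rfl fun σ _ => ?_
          rw [step σ, ← tsum_mul_left]
      _ = ∑' l : Fin N → ℕ, ∑ σ : Equiv.Perm (Fin N), K σ l :=
          (Summable.tsum_finsetSum fun σ _ => hKsum σ).symm
  -- closed form of H
  have hHform : ∀ l : Fin N → ℕ, H l = (∏ i, c (l i) * p (l i) (y i)) *
      Matrix.det (Matrix.of fun i j => p (l i) (x j)) := by
    intro l
    have hdx : Matrix.det (Matrix.of fun i j => p (l i) (x j))
        = ∑ σ : Equiv.Perm (Fin N), ((Equiv.Perm.sign σ : ℤ) : ℝ) * ∏ i, p (l i) (x (σ i)) := by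
      rw [← Matrix.det_transpose, det_exp]
      rfl
    rw [hdx, Finset.mul_sum]
    refine Finset.sum_congr rfl fun σ _ => ?_
    have : ∏ i, g σ i (l i) = (∏ i, c (l i) * p (l i) (y i)) * ∏ i, p (l i) (x (σ i)) := by
      rw [← Finset.prod_mul_distrib]
      exact Finset.prod_congr rfl fun i _ => by simp [hgdef]; ring
    rw [hKdef]
    simp only [this]
    ring
  -- H vanishes on non-injective tuples
  have hzero : ∀ l : Fin N → ℕ, ¬ Function.Injective l → H l = 0 := by
    intro l hl
    rw [Function.not_injective_iff] at hl
    obtain ⟨i, j, hij, hne⟩ := hl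
    rw [hHform]
    have : Matrix.det (Matrix.of fun i j => p (l i) (x j)) = 0 := by
      refine Matrix.det_zero_of_row_eq hne ?_
      funext k
      simp [hij]
    rw [this, mul_zero]
  -- the reindexing map
  set J : {l : Fin N → ℕ // StrictAnti l} × Equiv.Perm (Fin N) → (Fin N → ℕ) :=
    fun q => q.1.1 ∘ q.2 with hJdef
  have hJinj : Function.Injective J := by
    rintro ⟨⟨l₀, h₀⟩, σ⟩ ⟨⟨l₁, h₁⟩, τ⟩ h
    simp only [hJdef] at h
    have hr : Set.range l₀ = Set.range l₁ := by
      rw [← σ.surjective.range_comp l₀, ← τ.surjective.range_comp l₁, h]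
    have hl : l₀ = l₁ := (h₀.range_inj h₁).1 hr
    subst hl
    have hστ : σ = τ := Equiv.ext fun i => h₀.injective (congrFun h i)
    simp [hστ]
  have hrange : ∀ l : Fin N → ℕ, Function.Injective l → ∃ q, J q = l := by
    intro l hl
    have hcard : (Finset.image l Finset.univ).card = N := by
      rw [Finset.card_image_of_injective _ hl, Finset.card_univ, Fintype.card_fin]
    set m := Finset.orderIsoOfFin _ hcard with hm
    set l₀ : Fin N → ℕ := fun i => (m i.rev : ℕ) with hl₀
    have h₀ : StrictAnti l₀ := by
      intro i j hij
      have : j.rev < i.rev := by rwa [Fin.rev_lt_rev]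
      exact_mod_cast m.strictMono this
    have hmem : ∀ i, l i ∈ Finset.image l Finset.univ :=
      fun i => Finset.mem_image_of_mem l (Finset.mem_univ i)
    set τ : Fin N → Fin N := fun i => (m.symm ⟨l i, hmem i⟩).rev with hτ
    have hcomp : ∀ i, l₀ (τ i) = l i := by
      intro i
      simp only [hl₀, hτ, Fin.rev_rev, OrderIso.apply_symm_apply]
    have hτinj : Function.Injective τ := by
      intro i j hij
      apply hl
      rw [← hcomp i, ← hcomp j, hij]
    refine ⟨⟨⟨l₀, h₀⟩, Equiv.ofBijective τ ((Finite.injective_iff_bijective).1 hτinj)⟩, ?_⟩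
    funext i
    exact hcomp i
  have hsupp : Function.support H ⊆ Set.range J := by
    intro l hl
    by_cases hinj : Function.Injective l
    · obtain ⟨q, hq⟩ := hrange l hinj
      exact ⟨q, hq⟩
    · exact absurd (hzero l hinj) hl
  have hJsum : Summable (H ∘ J) := hHsum.comp_injective hJinj
  -- orbit sums
  have horbit : ∀ l₀ : {l : Fin N → ℕ // StrictAnti l},
      ∑ σ : Equiv.Perm (Fin N), H (l₀.1 ∘ σ)
        = (∏ i, c (l₀.1 i)) * Matrix.det (Matrix.of fun i j => p (l₀.1 i) (x j))
            * Matrix.det (Matrix.of fun i j => p (l₀.1 i) (y j)) := by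
    rintro ⟨l₀, h₀⟩
    have hperm : ∀ σ : Equiv.Perm (Fin N),
        Matrix.det (Matrix.of fun i j => p (l₀ (σ i)) (x j))
          = ((Equiv.Perm.sign σ : ℤ) : ℝ) *
              Matrix.det (Matrix.of fun i j => p (l₀ i) (x j)) := by
      intro σ
      have h2 : (Matrix.of fun i j => p (l₀ (σ i)) (x j))
          = (Matrix.of fun i j => p (l₀ i) (x j)).submatrix σ id := rfl
      rw [h2, Matrix.det_permute]
    have hD : Matrix.det (Matrix.of fun i j => c (l₀ i) * p (l₀ i) (y j))
        = (∏ i, c (l₀ i)) * Matrix.det (Matrix.of fun i j => p (l₀ i) (y j)) :=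
      Matrix.det_mul_column _ _
    calc ∑ σ : Equiv.Perm (Fin N), H (l₀ ∘ σ)
        = ∑ σ : Equiv.Perm (Fin N), ((Equiv.Perm.sign σ : ℤ) : ℝ) *
            (∏ i, c (l₀ (σ i)) * p (l₀ (σ i)) (y i)) *
            Matrix.det (Matrix.of fun i j => p (l₀ i) (x j)) := by
          refine Finset.sum_congr rfl fun σ _ => ?_
          rw [hHform]
          simp only [Function.comp_apply]
          rw [hperm σ]
          ring
      _ = Matrix.det (Matrix.of fun i j => c (l₀ i) * p (l₀ i) (y j)) *
            Matrix.det (Matrix.of fun i j => p (l₀ i) (x j)) := by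
          rw [det_exp (Matrix.of fun i j => c (l₀ i) * p (l₀ i) (y j)), Finset.sum_mul]
          rfl
      _ = (∏ i, c (l₀ i)) * Matrix.det (Matrix.of fun i j => p (l₀ i) (x j))
            * Matrix.det (Matrix.of fun i j => p (l₀ i) (y j)) := by
          rw [hD]; ring
  -- summability of the strictly antitone family
  have hfeq : (fun l₀ : {l : Fin N → ℕ // StrictAnti l} =>
      (∏ i, c (l₀.1 i)) * Matrix.det (Matrix.of fun i j => p (l₀.1 i) (x j))
        * Matrix.det (Matrix.of fun i j => p (l₀.1 i) (y j)))
      = fun l₀ => ∑ σ : Equiv.Perm (Fin N), H (l₀.1 ∘ σ) :=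
    funext fun l₀ => (horbit l₀).symm
  have hfsum : Summable (fun l₀ : {l : Fin N → ℕ // StrictAnti l} =>
      (∏ i, c (l₀.1 i)) * Matrix.det (Matrix.of fun i j => p (l₀.1 i) (x j))
        * Matrix.det (Matrix.of fun i j => p (l₀.1 i) (y j))) := by
    rw [hfeq]
    refine summable_sum fun σ _ => ?_
    have hinj : Function.Injective
        (fun l₀ : {l : Fin N → ℕ // StrictAnti l} => l₀.1 ∘ σ) := by
      intro l₀ l₁ h
      ext i
      have := congrFun h (σ.symm i)
      simpa using this
    exact hHsum.comp_injective hinj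
  refine ⟨hfsum, ?_⟩
  -- final computation
  calc ∑' l₀ : {l : Fin N → ℕ // StrictAnti l},
        (∏ i, c (l₀.1 i)) * Matrix.det (Matrix.of fun i j => p (l₀.1 i) (x j))
          * Matrix.det (Matrix.of fun i j => p (l₀.1 i) (y j))
      = ∑' l₀ : {l : Fin N → ℕ // StrictAnti l}, ∑ σ : Equiv.Perm (Fin N), H (l₀.1 ∘ σ) := by
        rw [hfeq]
    _ = ∑' l₀ : {l : Fin N → ℕ // StrictAnti l}, ∑' σ : Equiv.Perm (Fin N), H (J (l₀, σ)) := by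
        refine tsum_congr fun l₀ => ?_
        rw [tsum_fintype]
    _ = ∑' q : {l : Fin N → ℕ // StrictAnti l} × Equiv.Perm (Fin N), H (J q) :=
        (Summable.tsum_prod' hJsum fun b => Summable.of_finite).symm
    _ = ∑' l : Fin N → ℕ, H l := hJinj.tsum_eq hsupp
    _ = Matrix.det (Matrix.of fun i j => ∑' t : ℕ, c t * p t (x i) * p t (y j)) := hdet.symm
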